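/- Let {V¹_j}_{j=1}^{ℓ₁} be subspaces of V₁ and {V²_j}_{j=1}^{ℓ₂} be subspaces of V₂. Then (⋂_j V¹_j) ⊗ (⋂_j V²_j) = ⋂_{(j₁,j₂)} (V¹_{j₁} ⊗ V²_{j₂}), where the intersections on the right are over all pairs (j₁, j₂) ∈ [ℓ₁] × [ℓ₂]. -/

import Mathlib

open scoped TensorProduct

/-- The subspace of `V₁ ⊗ V₂` spanned by pure tensors with components in `U` and `W`. -/
noncomputable def tensorSub {K V₁ V₂ : Type*} [Field K] [AddCommGroup V₁] [Module K V₁]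
    [AddCommGroup V₂] [Module K V₂]
    (U : Submodule K V₁) (W : Submodule K V₂) : Submodule K (V₁ ⊗[K] V₂) :=
  Submodule.span K {x : V₁ ⊗[K] V₂ | ∃ u ∈ U, ∃ w ∈ W, x = u ⊗ₜ[K] w}

section Aux

open LinearMap TensorProduct

variable {K P V : Type*} [Field K] [AddCommGroup P] [Module K P]
  [AddCommGroup V] [Module K V]

/-- Flat version of exactness: range of lTensor of an inclusion equals kernel of lTensor of g. -/
lemma range_lTensor_eq_ker {Q : Type*} [AddCommGroup Q] [Module K Q] (g : V →ₗ[K] Q) :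
    range ((ker g).subtype.lTensor P) = ker (g.lTensor P) :=
  (LinearMap.exact_iff.mp (Module.Flat.lTensor_exact P (LinearMap.exact_subtype_ker_map g))).symm

lemma range_rTensor_eq_ker {Q : Type*} [AddCommGroup Q] [Module K Q] (g : V →ₗ[K] Q) :
    range ((ker g).subtype.rTensor P) = ker (g.rTensor P) :=
  (LinearMap.exact_iff.mp (Module.Flat.rTensor_exact P (LinearMap.exact_subtype_ker_map g))).symm

lemma range_lTensor_subtype (W : Submodule K V) :
    range (W.subtype.lTensor P) = ker (W.mkQ.lTensor P) :=
  (LinearMap.exact_iff.mp (Module.Flat.lTensor_exact P (LinearMap.exact_subtype_mkQ W))).symm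

lemma range_rTensor_subtype (W : Submodule K V) :
    range (W.subtype.rTensor P) = ker (W.mkQ.rTensor P) :=
  (LinearMap.exact_iff.mp (Module.Flat.rTensor_exact P (LinearMap.exact_subtype_mkQ W))).symm

lemma ker_lTensor_pi {ι : Type*} [Fintype ι] [DecidableEq ι] {Q : ι → Type*} [∀ i, AddCommGroup (Q i)]
    [∀ i, Module K (Q i)] (f : ∀ i, V →ₗ[K] Q i) :
    ker ((LinearMap.pi f).lTensor P) = ⨅ i, ker ((f i).lTensor P) := by
  have key : ∀ i, ((LinearMap.proj i : (∀ i, P ⊗[K] Q i) →ₗ[K] P ⊗[K] Q i) ∘ₗ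
      (TensorProduct.piRight K K P Q).toLinearMap ∘ₗ
      (LinearMap.pi f).lTensor P) = (f i).lTensor P := by
    intro i
    apply TensorProduct.ext'
    intro v w
    simp [TensorProduct.piRight_apply, TensorProduct.piRightHom_tmul]
  ext x
  simp only [Submodule.mem_iInf, mem_ker]
  constructor
  · intro h i
    have := congrArg (fun y => (LinearMap.proj i ∘ₗ
      (TensorProduct.piRight K K P Q).toLinearMap) y) h
    simpa [← key i] using this
  · intro h
    apply (TensorProduct.piRight K K P Q).injective
    rw [map_zero]
    funext i
    have hx : (f i).lTensor P x = 0 := h i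
    rw [← key i] at hx
    simpa using hx

lemma ker_rTensor_comm {Q : Type*} [AddCommGroup Q] [Module K Q] (g : V →ₗ[K] Q) :
    ker (g.rTensor P) =
      Submodule.comap (TensorProduct.comm K V P).toLinearMap (ker (g.lTensor P)) := by
  ext x
  have key : (g.lTensor P) ∘ₗ (TensorProduct.comm K V P).toLinearMap
      = (TensorProduct.comm K Q P).toLinearMap ∘ₗ g.rTensor P := by
    apply TensorProduct.ext'; intro v w; simp
  simp only [Submodule.mem_comap, mem_ker, ← LinearMap.comp_apply, key]
  constructor
  · intro h; simp [LinearMap.comp_apply, h]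
  · intro h
    have := congrArg (TensorProduct.comm K Q P).symm h
    simpa using this

lemma ker_rTensor_pi {ι : Type*} [Fintype ι] [DecidableEq ι] {Q : ι → Type*} [∀ i, AddCommGroup (Q i)]
    [∀ i, Module K (Q i)] (f : ∀ i, V →ₗ[K] Q i) :
    ker ((LinearMap.pi f).rTensor P) = ⨅ i, ker ((f i).rTensor P) := by
  simp_rw [ker_rTensor_comm (P := P), ker_lTensor_pi, Submodule.comap_iInf]

/-- `tensorSub` as an intersection of kernels. -/
lemma tensorSub_eq_inf_ker {V₂ : Type*} [AddCommGroup V₂] [Module K V₂]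
    (U : Submodule K V) (W : Submodule K V₂) :
    tensorSub U W = ker (U.mkQ.rTensor V₂) ⊓ ker (W.mkQ.lTensor V) := by
  have hts : tensorSub U W = range (TensorProduct.mapIncl U W) := by
    rw [TensorProduct.range_mapIncl, Submodule.map₂_eq_span_image2, tensorSub]
    congr 1
    ext x
    simp only [Set.mem_setOf_eq, Set.mem_image2, SetLike.mem_coe]
    constructor
    · rintro ⟨u, hu, w, hw, rfl⟩; exact ⟨u, hu, w, hw, rfl⟩
    · rintro ⟨u, hu, w, hw, rfl⟩; exact ⟨u, hu, w, hw, rfl⟩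
  have hdecomp : TensorProduct.mapIncl U W
      = (U.subtype.rTensor V₂) ∘ₗ (W.subtype.lTensor U) := by
    rw [TensorProduct.mapIncl, ← LinearMap.rTensor_comp_lTensor]
  have hdecomp' : TensorProduct.mapIncl U W
      = (W.subtype.lTensor V) ∘ₗ (U.subtype.rTensor W) := by
    rw [TensorProduct.mapIncl, ← LinearMap.lTensor_comp_rTensor]
  apply le_antisymm
  · rw [hts]
    apply le_inf
    · rw [hdecomp, ← range_rTensor_subtype]
      exact LinearMap.range_comp_le_range _ _
    · rw [hdecomp', ← range_lTensor_subtype]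
      exact LinearMap.range_comp_le_range _ _
  · rintro x ⟨hx1, hx2⟩
    rw [← range_rTensor_subtype] at hx1
    obtain ⟨y, rfl⟩ := hx1
    -- x = rTensor U.subtype y with y : U ⊗ V₂; show y comes from U ⊗ W
    have hcomm : (W.mkQ.lTensor V) ∘ₗ (U.subtype.rTensor V₂)
        = (U.subtype.rTensor (V₂ ⧸ W)) ∘ₗ (W.mkQ.lTensor U) := by
      rw [LinearMap.lTensor_comp_rTensor, LinearMap.rTensor_comp_lTensor]
    have h0 : (U.subtype.rTensor (V₂ ⧸ W)) ((W.mkQ.lTensor U) y) = 0 := by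
      rw [← LinearMap.comp_apply, ← hcomm, LinearMap.comp_apply]
      exact hx2
    have hinj : Function.Injective (U.subtype.rTensor (V₂ ⧸ W)) :=
      Module.Flat.rTensor_preserves_injective_linearMap _ U.injective_subtype
    have hy0 : (W.mkQ.lTensor U) y = 0 := by
      apply hinj; rw [h0, map_zero]
    have : y ∈ range (W.subtype.lTensor U) := by
      rw [range_lTensor_subtype]; exact hy0
    obtain ⟨z, rfl⟩ := this
    rw [hts, hdecomp]
    exact ⟨z, rfl⟩

end Aux

open LinearMap TensorProduct
theorem tensor_of_iInf_eq_iInf_tensor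
    {K V₁ V₂ : Type*} [Field K] [AddCommGroup V₁] [Module K V₁] [AddCommGroup V₂] [Module K V₂]
    [FiniteDimensional K V₁] [FiniteDimensional K V₂]
    {ℓ₁ ℓ₂ : ℕ} (hℓ₁ : 0 < ℓ₁) (hℓ₂ : 0 < ℓ₂)
    (U : Fin ℓ₁ → Submodule K V₁) (W : Fin ℓ₂ → Submodule K V₂) :
    tensorSub (⨅ j, U j) (⨅ j, W j)
      = ⨅ p : Fin ℓ₁ × Fin ℓ₂, tensorSub (U p.1) (W p.2) := by
  haveI : Nonempty (Fin ℓ₁) := ⟨⟨0, hℓ₁⟩⟩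
  haveI : Nonempty (Fin ℓ₂) := ⟨⟨0, hℓ₂⟩⟩
  have hU : ker ((⨅ j, U j).mkQ.rTensor V₂) = ⨅ j, ker ((U j).mkQ.rTensor V₂) := by
    have h1 : (⨅ j, U j) = ker (LinearMap.pi fun j => (U j).mkQ) := by
      rw [LinearMap.ker_pi]; simp
    rw [← range_rTensor_subtype, h1, range_rTensor_eq_ker, ker_rTensor_pi]
  have hW : ker ((⨅ j, W j).mkQ.lTensor V₁) = ⨅ j, ker ((W j).mkQ.lTensor V₁) := by
    have h1 : (⨅ j, W j) = ker (LinearMap.pi fun j => (W j).mkQ) := by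
      rw [LinearMap.ker_pi]; simp
    rw [← range_lTensor_subtype, h1, range_lTensor_eq_ker, ker_lTensor_pi]
  simp_rw [tensorSub_eq_inf_ker, hU, hW, iInf_prod]
  rw [iInf_inf]
  exact iInf_congr fun j => inf_iInf
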